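/- Let A ⊆ B be rings and let b, a_1, …, a_n ∈ B generate the unit ideal of B. Let φ_b : B → B_b be the localization map and let A' be the subring of B_b generated by φ_b(A) together with the elements a_1/b, …, a_n/b. Then the induced ring homomorphism B ⊗_A A' → B_b is surjective; in particular it is integral, so the homomorphism of pairs of rings (B, A) → (B_b, A') is adic. -/

import Mathlib

/-- let `b, a_1, …, a_n ∈ B` generate the unit ideal, let `φ_b : B → B_b`
be the localization map and let `A'` be the subring of `B_b` generated by `φ_b(A)` and
the elements `a i / b`.  Then the induced map `B ⊗_A A' → B_b`, `x ⊗ a' ↦ φ_b x * a'`,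
is surjective (every element of `B_b` is a finite sum `∑ φ_b (c i) * s i` with
`s i ∈ A'`); in particular, every element of `B_b` is integral over the image of
`B ⊗_A A' → B_b` (the subring generated by `φ_b(B)` and `A'`), i.e. the homomorphism of
pairs `(B, A) → (B_b, A')` is adic. -/
theorem stmt16 {B : Type*} [CommRing B] (A : Subring B) {n : ℕ} (b : B) (a : Fin n → B)
    (hspan : Ideal.span ({b} ∪ Set.range a) = ⊤)
    (A' : Subring (Localization.Away b))
    (hA' : A' = Subring.closure
      ((algebraMap B (Localization.Away b)) '' (A : Set B) ∪
        Set.range fun i =>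
          algebraMap B (Localization.Away b) (a i) * IsLocalization.Away.invSelf b)) :
    (∀ x : Localization.Away b, ∃ (m : ℕ) (c : Fin m → B) (s : Fin m → Localization.Away b),
      (∀ i, s i ∈ A') ∧ x = ∑ i, algebraMap B (Localization.Away b) (c i) * s i) ∧
    (∀ x : Localization.Away b,
      IsIntegral (Subring.closure (Set.range (algebraMap B (Localization.Away b)) ∪
        (A' : Set (Localization.Away b)))) x) := by
  set φ := algebraMap B (Localization.Away b) with hφ
  set u : Localization.Away b := IsLocalization.Away.invSelf b with hu
  have hbu : φ b * u = 1 := IsLocalization.Away.mul_invSelf b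
  -- the generators of A' are in A'
  have hgen : ∀ i, φ (a i) * u ∈ A' := by
    intro i
    rw [hA']
    exact Subring.subset_closure (Or.inr ⟨i, rfl⟩)
  -- 1 = c*b + ∑ d i * a i
  have h1 : (1 : B) ∈ Ideal.span ({b} ∪ Set.range a) := hspan ▸ trivial
  rw [Set.union_comm, Set.union_singleton, Ideal.mem_span_insert] at h1
  obtain ⟨c, z, hz, hzc⟩ := h1
  rw [Ideal.mem_span_range_iff_exists_fun] at hz
  obtain ⟨d, hd⟩ := hz
  -- u ∈ adjoin B A'
  have huA : u ∈ Algebra.adjoin B (A' : Set (Localization.Away b)) := by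
    have : u = φ c + ∑ i, φ (d i) * (φ (a i) * u) := by
      have : φ 1 = φ (c * b + z) := by rw [← hzc]
      simp only [map_one, map_add, map_mul] at this
      calc u = 1 * u := (one_mul u).symm
        _ = (φ c * φ b + φ z) * u := by rw [this]
        _ = φ c * (φ b * u) + φ z * u := by ring
        _ = φ c + φ z * u := by rw [hbu, mul_one]
        _ = φ c + ∑ i, φ (d i) * (φ (a i) * u) := by
            rw [← hd]; simp only [map_sum, map_mul, Finset.sum_mul]; ring_nf
            congr 1; exact Finset.sum_congr rfl fun i _ => by ring
    rw [this]
    refine add_mem (Subalgebra.algebraMap_mem _ c) (Subalgebra.sum_mem _ fun i _ => ?_)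
    exact mul_mem (Subalgebra.algebraMap_mem _ (d i)) (Algebra.subset_adjoin (hgen i))
  -- adjoin B A' = ⊤
  have hadj : Algebra.adjoin B (A' : Set (Localization.Away b)) = ⊤ := by
    rw [eq_top_iff]
    rintro x -
    obtain ⟨⟨r, s, hs⟩, hx⟩ := IsLocalization.surj (Submonoid.powers b) x
    obtain ⟨m, rfl⟩ := hs
    have hun : x = φ r * u ^ m := by
      have hbum : φ (b ^ m) * u ^ m = 1 := by
        rw [map_pow, ← mul_pow, hbu, one_pow]
      calc x = x * 1 := (mul_one x).symm
        _ = x * (φ (b ^ m) * u ^ m) := by rw [hbum]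
        _ = (x * φ (b ^ m)) * u ^ m := by ring
        _ = φ r * u ^ m := by rw [hx]
    rw [hun]
    exact mul_mem (Subalgebra.algebraMap_mem _ r) (pow_mem huA m)
  constructor
  · intro x
    have hx : x ∈ Submodule.span B (A' : Set (Localization.Away b)) := by
      have hsub : ↑(Submonoid.closure (A' : Set (Localization.Away b))) ⊆
          (Submodule.span B (A' : Set (Localization.Away b)) : Set (Localization.Away b)) := by
        intro y hy
        have hy' : y ∈ A' := by
          have := (Submonoid.closure_le (S := A'.toSubmonoid)).2
            (subset_refl (A' : Set (Localization.Away b))) hy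
          exact this
        exact Submodule.subset_span hy'
      have heq := Algebra.adjoin_eq_span_of_subset (R := B) hsub
      rw [hadj] at heq
      rw [← heq]
      trivial
    rw [Submodule.mem_span_set'] at hx
    obtain ⟨m, f, g, hfg⟩ := hx
    exact ⟨m, f, fun i => (g i : Localization.Away b), fun i => (g i).2, by
      rw [← hfg]; exact Finset.sum_congr rfl fun i _ => Algebra.smul_def (f i) ((g i : Localization.Away b))⟩
  · intro x
    have hcl : Subring.closure (Set.range φ ∪ (A' : Set (Localization.Away b))) = ⊤ := by
      rw [← Algebra.adjoin_eq_ring_closure, hadj]; rfl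
    have hxmem : x ∈ Subring.closure (Set.range φ ∪ (A' : Set (Localization.Away b))) := by
      rw [hcl]; trivial
    exact isIntegral_algebraMap (x := (⟨x, hxmem⟩ :
      Subring.closure (Set.range φ ∪ (A' : Set (Localization.Away b)))))
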